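/- arXiv:2602.21903 — 2 statements merged into one kernel-verified Lean document; each statement's English description precedes it below -/
import Mathlib

section
/- (Theorem 2, existence of a variance weights vector.) Let A be a real m × R matrix with rank(A) = R, suppose ι_m ∉ col(A), let C be a real symmetric positive semidefinite m × m matrix, set D := (A, ι_m) (the m × (R+1) matrix obtained by appending ι_m as a column), and assume null(Dᵀ) ⊄ null(C). Let v* minimize v ↦ vᵀCv over V := {v : Aᵀv = 0, ιᵀv = 1}. Then there exists u* ∈ ℝ^m satisfying u*ᵀA = 0, u*ᵀι_m = 0, and u*ᵀCu* = v*ᵀCv*; moreover every such u* with Dᵀu* = 0 satisfies u*ᵀCv* = 0. -/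
open Matrix

lemma quad_aux (a b : ℝ) (hb : 0 ≤ b) (h : ∀ t : ℝ, 0 ≤ 2 * t * a + t ^ 2 * b) :
    a = 0 := by
  rcases eq_or_lt_of_le hb with hb0 | hb0
  · have h1 := h (-a)
    nlinarith [sq_nonneg a]
  · have h1 := h (-(a / b))
    have key : 2 * (-(a / b)) * a + (-(a / b)) ^ 2 * b = -(a ^ 2 / b) := by
      field_simp
      ring
    rw [key] at h1
    have h2 : a ^ 2 / b = 0 :=
      le_antisymm (by linarith) (div_nonneg (sq_nonneg a) hb0.le)
    field_simp at h2
    simpa using h2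

/-- Theorem 2: existence of a variance weights vector `u*` with `u*ᵀA = 0`, `u*ᵀι = 0`
and `u*ᵀCu* = v*ᵀCv*`; moreover every `u` with `Dᵀu = 0` satisfies `uᵀCv* = 0`. -/
theorem stmt_3 (m R : ℕ)
    (A : Matrix (Fin m) (Fin R) ℝ) (hrank : A.rank = R)
    (hι : ¬ ∃ x : Fin R → ℝ, A.mulVec x = fun _ => (1 : ℝ))
    (C : Matrix (Fin m) (Fin m) ℝ) (hC : C.PosSemidef)
    (D : Matrix (Fin m) (Fin (R + 1)) ℝ)
    (hD : D = Matrix.of fun i => Fin.snoc (A i) (1 : ℝ))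
    (hnull : ¬ ({u : Fin m → ℝ | Dᵀ.mulVec u = 0} ⊆ {u : Fin m → ℝ | C.mulVec u = 0}))
    (v : Fin m → ℝ)
    (hfeas : Aᵀ.mulVec v = 0 ∧ (fun _ => (1 : ℝ)) ⬝ᵥ v = 1)
    (hmin : ∀ w : Fin m → ℝ, Aᵀ.mulVec w = 0 → (fun _ => (1 : ℝ)) ⬝ᵥ w = 1 →
      v ⬝ᵥ C.mulVec v ≤ w ⬝ᵥ C.mulVec w) :
    (∃ u : Fin m → ℝ, Aᵀ.mulVec u = 0 ∧ (u ⬝ᵥ fun _ => (1 : ℝ)) = 0 ∧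
      u ⬝ᵥ C.mulVec u = v ⬝ᵥ C.mulVec v) ∧
    (∀ u : Fin m → ℝ, Dᵀ.mulVec u = 0 → u ⬝ᵥ C.mulVec v = 0) := by
  -- decompose Dᵀ u = 0 into the two conditions
  have hD' : ∀ u : Fin m → ℝ, Dᵀ.mulVec u = 0 →
      Aᵀ.mulVec u = 0 ∧ (u ⬝ᵥ fun _ => (1 : ℝ)) = 0 := by
    intro u hu
    constructor
    · funext k
      have := congrFun hu (Fin.castSucc k)
      simpa [hD, Matrix.mulVec, dotProduct, Matrix.transpose_apply,
        Fin.snoc_castSucc, mul_comm] using this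
    · have := congrFun hu (Fin.last R)
      simpa [hD, Matrix.mulVec, dotProduct, Matrix.transpose_apply,
        Fin.snoc_last, mul_comm] using this
  -- symmetry of C
  have hsym : ∀ x y : Fin m → ℝ, x ⬝ᵥ C.mulVec y = y ⬝ᵥ C.mulVec x := by
    intro x y
    have hCt : Cᵀ = C := by
      have := hC.1
      simpa [Matrix.IsHermitian, Matrix.conjTranspose_eq_transpose_of_trivial] using this
    rw [Matrix.dotProduct_mulVec, ← Matrix.mulVec_transpose,
      dotProduct_comm, hCt]
  -- second part
  have part2 : ∀ u : Fin m → ℝ, Dᵀ.mulVec u = 0 → u ⬝ᵥ C.mulVec v = 0 := by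
    intro u hu
    obtain ⟨hA0, hι0⟩ := hD' u hu
    have huu : 0 ≤ u ⬝ᵥ C.mulVec u := by
      have := hC.dotProduct_mulVec_nonneg u
      simpa using this
    apply quad_aux _ _ huu
    intro t
    have hfe1 : Aᵀ.mulVec (v + t • u) = 0 := by
      rw [Matrix.mulVec_add, hfeas.1, Matrix.mulVec_smul, hA0]
      simp
    have hfe2 : (fun _ => (1 : ℝ)) ⬝ᵥ (v + t • u) = 1 := by
      rw [dotProduct_add, hfeas.2, dotProduct_smul]
      rw [dotProduct_comm] at hι0
      rw [hι0]
      simp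
    have hle := hmin (v + t • u) hfe1 hfe2
    have hexp : (v + t • u) ⬝ᵥ C.mulVec (v + t • u) =
        v ⬝ᵥ C.mulVec v + 2 * t * (u ⬝ᵥ C.mulVec v) + t ^ 2 * (u ⬝ᵥ C.mulVec u) := by
      rw [Matrix.mulVec_add, Matrix.mulVec_smul]
      simp only [dotProduct_add, add_dotProduct,
        dotProduct_smul, smul_dotProduct, smul_eq_mul]
      rw [hsym v u]
      ring
    rw [hexp] at hle
    linarith
  refine ⟨?_, part2⟩
  -- first part: pick w with Dᵀ w = 0 and C w ≠ 0
  rw [Set.not_subset] at hnull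
  obtain ⟨w, hw1, hw2⟩ := hnull
  simp only [Set.mem_setOf_eq] at hw1 hw2
  obtain ⟨hwA, hwι⟩ := hD' w hw1
  have hww : 0 < w ⬝ᵥ C.mulVec w := by
    have h0 : 0 ≤ w ⬝ᵥ C.mulVec w := by simpa using hC.dotProduct_mulVec_nonneg w
    rcases lt_or_eq_of_le h0 with h | h
    · exact h
    · exfalso
      apply hw2
      rw [← hC.dotProduct_mulVec_zero_iff w]
      simpa using h.symm
  have hvv : 0 ≤ v ⬝ᵥ C.mulVec v := by simpa using hC.dotProduct_mulVec_nonneg v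
  set t : ℝ := Real.sqrt (v ⬝ᵥ C.mulVec v / (w ⬝ᵥ C.mulVec w))
  refine ⟨t • w, ?_, ?_, ?_⟩
  · rw [Matrix.mulVec_smul, hwA]; simp
  · rw [smul_dotProduct, hwι]; simp
  · rw [Matrix.mulVec_smul]
    simp only [dotProduct_smul, smul_dotProduct, smul_eq_mul]
    have ht : t * t = v ⬝ᵥ C.mulVec v / (w ⬝ᵥ C.mulVec w) :=
      Real.mul_self_sqrt (div_nonneg hvv hww.le)
    rw [← mul_assoc, ht]
    field_simp
end

section
/- (Covariance structure underlying Theorem 4.) Let A be a real m × R matrix, C a real symmetric positive semidefinite m × m matrix, D := (A, ι_m), and let v* minimize v ↦ vᵀCv over V := {v : Aᵀv = 0, ιᵀv = 1}. Let u₁*, …, u_q* ∈ ℝ^m satisfy, with U* the m × q matrix with these columns: U*ᵀA = 0, U*ᵀι_m = 0, and U*ᵀC U* = (v*ᵀCv*)·I_q. Then U*ᵀCv* = 0, and consequently the (q+1) × (q+1) matrix with block form [[v*ᵀCv*, v*ᵀC U*],[U*ᵀCv*, U*ᵀC U*]] equals (v*ᵀCv*)·I_{q+1}. -/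
open Matrix

/-- Covariance structure underlying Theorem 4: if the columns of `U*` satisfy
`U*ᵀA = 0`, `U*ᵀι = 0`, `U*ᵀCU* = (v*ᵀCv*)·I_q` and `v*` minimizes `vᵀCv` over `V`,
then `U*ᵀCv* = 0` and the `(q+1) × (q+1)` block covariance matrix equals
`(v*ᵀCv*)·I_{q+1}`. -/
theorem stmt_4 (m R q : ℕ)
    (A : Matrix (Fin m) (Fin R) ℝ)
    (C : Matrix (Fin m) (Fin m) ℝ) (hC : C.PosSemidef)
    (v : Fin m → ℝ)
    (hfeas : Aᵀ.mulVec v = 0 ∧ (fun _ => (1 : ℝ)) ⬝ᵥ v = 1)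
    (hmin : ∀ w : Fin m → ℝ, Aᵀ.mulVec w = 0 → (fun _ => (1 : ℝ)) ⬝ᵥ w = 1 →
      v ⬝ᵥ C.mulVec v ≤ w ⬝ᵥ C.mulVec w)
    (U : Matrix (Fin m) (Fin q) ℝ)
    (hUA : Uᵀ * A = 0)
    (hUι : Uᵀ.mulVec (fun _ => (1 : ℝ)) = 0)
    (hUCU : Uᵀ * C * U = (v ⬝ᵥ C.mulVec v) • (1 : Matrix (Fin q) (Fin q) ℝ)) :
    Uᵀ.mulVec (C.mulVec v) = 0 ∧
    Matrix.fromBlocks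
      (Matrix.of fun (_ : Fin 1) (_ : Fin 1) => v ⬝ᵥ C.mulVec v)
      (Matrix.of fun (_ : Fin 1) (j : Fin q) => v ⬝ᵥ C.mulVec (fun i => U i j))
      (Matrix.of fun (j : Fin q) (_ : Fin 1) => (fun i => U i j) ⬝ᵥ C.mulVec v)
      (Uᵀ * C * U)
      = (v ⬝ᵥ C.mulVec v) • (1 : Matrix (Fin 1 ⊕ Fin q) (Fin 1 ⊕ Fin q) ℝ) := by
  obtain ⟨hA, hι⟩ := hfeas
  set s := v ⬝ᵥ C.mulVec v with hs
  have hCsymm : Cᵀ = C := hC.1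
  have hs0 : 0 ≤ s := by
    have := hC.dotProduct_mulVec_nonneg v
    simpa [hs] using this
  have symm : ∀ x y : Fin m → ℝ, x ⬝ᵥ C.mulVec y = y ⬝ᵥ C.mulVec x := by
    intro x y
    rw [Matrix.dotProduct_mulVec, ← Matrix.mulVec_transpose, hCsymm,
      dotProduct_comm]
  -- key: each column of U is C-orthogonal to v
  have key : ∀ j : Fin q, (fun i => U i j) ⬝ᵥ C.mulVec v = 0 := by
    intro j
    set u : Fin m → ℝ := fun i => U i j with hu
    set a := u ⬝ᵥ C.mulVec v with ha
    have huA : Aᵀ.mulVec u = 0 := by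
      funext r
      have h := congrFun (congrFun hUA j) r
      simpa [Matrix.mul_apply, mulVec, dotProduct, transpose_apply, mul_comm] using h
    have huι : (fun _ => (1:ℝ)) ⬝ᵥ u = 0 := by
      have h := congrFun hUι j
      simpa [mulVec, dotProduct, transpose_apply, mul_comm] using h
    have huCu : u ⬝ᵥ C.mulVec u = s := by
      have h := congrFun (congrFun hUCU j) j
      have h2 : (Uᵀ * C * U) j j = u ⬝ᵥ C.mulVec u := by
        rw [Matrix.mul_assoc]
        simp [Matrix.mul_apply, mulVec, dotProduct, transpose_apply, hu]
      rw [h2] at h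
      simpa [Matrix.one_apply] using h
    set t : ℝ := -a / (s + 1) with htdef
    set w : Fin m → ℝ := fun i => v i + t * u i with hw
    have hwv : w = v + t • u := by funext i; simp [hw, mul_comm]
    have hwA : Aᵀ.mulVec w = 0 := by
      rw [hwv, Matrix.mulVec_add, Matrix.mulVec_smul, hA, huA]
      simp
    have hwι : (fun _ => (1:ℝ)) ⬝ᵥ w = 1 := by
      rw [hwv, dotProduct_add, dotProduct_smul, hι, huι]
      simp
    have hineq := hmin w hwA hwι
    have hexp : w ⬝ᵥ C.mulVec w = s + 2 * t * a + t ^ 2 * s := by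
      have h1 : v ⬝ᵥ C.mulVec u = a := by rw [ha, symm]
      rw [hwv, Matrix.mulVec_add, Matrix.mulVec_smul, dotProduct_add,
        add_dotProduct, add_dotProduct, dotProduct_smul, dotProduct_smul,
        smul_dotProduct, h1, ← ha, ← hs]
      simp only [smul_dotProduct, smul_eq_mul, huCu]
      ring
    rw [hexp] at hineq
    have hsp : (0:ℝ) < s + 1 := by linarith
    have ht1 : t * (s + 1) = -a := by
      rw [htdef, div_mul_cancel₀ _ hsp.ne']
    -- 0 ≤ 2*t*a + t^2*s, with t = -a/(s+1) forces a = 0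
    have h0 : 0 ≤ 2 * t * a + t ^ 2 * s := by linarith
    nlinarith [sq_nonneg a, sq_nonneg t, sq_nonneg (t * (s + 1)), mul_pos hsp hsp,
      mul_le_mul_of_nonneg_left h0 (le_of_lt hsp)]
  constructor
  · funext j
    have := key j
    simpa [mulVec, dotProduct, transpose_apply] using this
  · ext i k
    rcases i with i | i <;> rcases k with k | k
    · simp [Matrix.fromBlocks, Matrix.one_apply, Subsingleton.elim i k]
    · have h := key k
      rw [symm] at h
      simp [Matrix.fromBlocks, Matrix.one_apply, h]
    · simp [Matrix.fromBlocks, Matrix.one_apply, key i]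
    · rw [hUCU]
      simp [Matrix.fromBlocks, Matrix.one_apply, Matrix.smul_apply]
end
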